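/- Let R be a commutative ring and M a multiplication R-module. Then the girth of the M-intersection graph G_M(R) is either 3 or ∞; that is, if G_M(R) contains a cycle, it contains a triangle. -/

import Mathlib

/-- The `M`-intersection graph of ideals of `R`: vertices are the nontrivial ideals of `R`,
and two distinct vertices `I`, `J` are adjacent iff `IM ∩ JM ≠ 0`. -/
def interGraph (R M : Type*) [CommRing R] [AddCommGroup M] [Module R M] :
    SimpleGraph {I : Ideal R // I ≠ ⊥ ∧ I ≠ ⊤} where
  Adj I J := I ≠ J ∧ (I.1 • ⊤ ⊓ J.1 • ⊤ : Submodule R M) ≠ ⊥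
  symm := ⟨fun I J h => ⟨h.1.symm, by rw [inf_comm]; exact h.2⟩⟩
  loopless := ⟨fun I h => h.1 rfl⟩

open SimpleGraph

/-- A graph containing a triangle has extended girth `3`. -/
lemma egirth_eq_three_of_triangle {α : Type*} {G : SimpleGraph α} {u v x : α}
    (huv : G.Adj u v) (hvx : G.Adj v x) (hux : G.Adj u x) : G.egirth = 3 := by
  refine le_antisymm ?_ G.three_le_egirth
  have hcyc : (Walk.cons huv (Walk.cons hvx (Walk.cons hux.symm Walk.nil))).IsCycle := by
    rw [Walk.cons_isCycle_iff]
    constructor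
    · apply Walk.IsPath.mk'
      simp [hvx.ne, hux.ne, huv.ne, hvx.ne', hux.ne', huv.ne']
    · simp [Sym2.eq_iff, hvx.ne, hux.ne, huv.ne, hvx.ne', hux.ne', huv.ne']
  have hle : G.egirth ≤
      ((Walk.cons huv (Walk.cons hvx (Walk.cons hux.symm Walk.nil))).length : ℕ∞) :=
    iInf_le_of_le u (iInf_le_of_le _ (iInf_le_of_le hcyc le_rfl))
  simpa using hle

/-- In a triangle-free `M`-intersection graph of a multiplication module, the submodules
`IM` and `JM` of any two adjacent vertices are comparable. -/
lemma edge_comparable {R M : Type*} [CommRing R] [AddCommGroup M] [Module R M]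
    (hmul : ∀ N : Submodule R M, ∃ I : Ideal R, N = I • ⊤)
    (htri : ∀ u v x : {I : Ideal R // I ≠ ⊥ ∧ I ≠ ⊤},
      (interGraph R M).Adj u v → (interGraph R M).Adj v x → (interGraph R M).Adj u x → False)
    {I J : {I : Ideal R // I ≠ ⊥ ∧ I ≠ ⊤}} (hIJ : (interGraph R M).Adj I J) :
    (I.1 • ⊤ : Submodule R M) ≤ J.1 • ⊤ ∨ (J.1 • ⊤ : Submodule R M) ≤ I.1 • ⊤ := by
  obtain ⟨hne, hN⟩ := hIJ
  obtain ⟨K, hK⟩ := hmul ((I.1 • ⊤ ⊓ J.1 • ⊤ : Submodule R M))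
  have hKbot : K ≠ ⊥ := by
    rintro rfl
    rw [Submodule.bot_smul] at hK
    exact hN hK
  by_cases hKtop : K = ⊤
  · subst hKtop
    rw [Submodule.top_smul] at hK
    left
    have h1 : (I.1 • ⊤ : Submodule R M) = ⊤ := top_le_iff.1 (hK.ge.trans inf_le_left)
    have h2 : (J.1 • ⊤ : Submodule R M) = ⊤ := top_le_iff.1 (hK.ge.trans inf_le_right)
    rw [h1, h2]
  by_cases hKI : K = I.1
  · left
    rw [← hKI, ← hK]
    exact inf_le_right
  by_cases hKJ : K = J.1
  · right
    rw [← hKJ, ← hK]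
    exact inf_le_left
  · exfalso
    set v : {I : Ideal R // I ≠ ⊥ ∧ I ≠ ⊤} := ⟨K, hKbot, hKtop⟩ with hv
    have hKle1 : (K • ⊤ : Submodule R M) ≤ I.1 • ⊤ := hK ▸ inf_le_left
    have hKle2 : (K • ⊤ : Submodule R M) ≤ J.1 • ⊤ := hK ▸ inf_le_right
    have hKne : (K • ⊤ : Submodule R M) ≠ ⊥ := hK ▸ hN
    refine htri v I J ⟨?_, ?_⟩ ⟨hne, hN⟩ ⟨?_, ?_⟩
    · exact fun h => hKI (congrArg Subtype.val h)
    · rwa [inf_of_le_left hKle1]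
    · exact fun h => hKJ (congrArg Subtype.val h)
    · rwa [inf_of_le_left hKle2]

/-- If `M` is a multiplication module over a commutative ring `R`, then the
girth of `G_M(R)` is either `3` or `∞`. -/
theorem egirth_eq_three_or_top (R M : Type*) [CommRing R] [AddCommGroup M] [Module R M]
    [Nontrivial M]
    (hmul : ∀ N : Submodule R M, ∃ I : Ideal R, N = I • ⊤) :
    (interGraph R M).egirth = 3 ∨ (interGraph R M).egirth = ⊤ := by
  by_cases hac : (interGraph R M).IsAcyclic
  · exact Or.inr hac.egirth_eq_top
  left
  by_contra hg3
  have htri : ∀ u v x : {I : Ideal R // I ≠ ⊥ ∧ I ≠ ⊤},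
      (interGraph R M).Adj u v → (interGraph R M).Adj v x → (interGraph R M).Adj u x → False :=
    fun u v x h1 h2 h3 => hg3 (egirth_eq_three_of_triangle h1 h2 h3)
  obtain ⟨a, w, hw, hlen⟩ := (SimpleGraph.exists_egirth_eq_length).2 hac
  cases w with
  | nil => exact hw.not_of_nil
  | cons h1 p =>
  rename_i b
  cases p with
  | nil => have := hw.three_le_length; simp at this
  | cons h2 p2 =>
  rename_i c
  cases p2 with
  | nil => have := hw.three_le_length; simp at this
  | cons h3 q =>
  rename_i d
  by_cases hq : q.Nil
  · refine hg3 ?_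
    rw [hlen]
    simp [Walk.nil_iff_length_eq.1 hq]
  · have ha_tail : a ∈ q.support.tail := by
      rw [← Walk.support_tail_of_not_nil q hq]
      exact Walk.end_mem_support _
    have hnd := hw.support_nodup
    simp only [Walk.support_cons, List.tail_cons] at hnd
    rw [q.support_eq_cons] at hnd
    simp only [List.nodup_cons, List.mem_cons, not_or] at hnd
    obtain ⟨⟨hbc, hbd, hbt⟩, ⟨hcd, hct⟩, hdt, _⟩ := hnd
    have hca : c ≠ a := fun h => hct (h ▸ ha_tail)
    have hacbot : (a.1 • ⊤ ⊓ c.1 • ⊤ : Submodule R M) = ⊥ := by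
      by_contra h
      exact htri a b c h1 h2 ⟨fun he => hca he.symm, h⟩
    have hbdbot : (b.1 • ⊤ ⊓ d.1 • ⊤ : Submodule R M) = ⊥ := by
      by_contra h
      exact htri b c d h2 h3 ⟨hbd, h⟩
    rcases edge_comparable hmul htri h2 with hle | hle
    · exact h1.2 (le_bot_iff.1 (le_trans (inf_le_inf_left _ hle) hacbot.le))
    · exact h3.2 (le_bot_iff.1 (le_trans (inf_le_inf_right _ hle) hbdbot.le))
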